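/- Let f : [a,b] → ℝ be continuous and positive with ∫_a^b f(x) dx ≥ (b-a)^(p-1), where p < 0. Then ∫_a^b f(x)^p dx ≥ (∫_a^b f(x) dx)^(p-1). -/

import Mathlib

open MeasureTheory Set

lemma convexOn_rpow_neg {p : ℝ} (hp : p < 0) :
    ConvexOn ℝ (Set.Ioi (0 : ℝ)) fun x : ℝ ↦ x ^ p := by
  have hopen : IsOpen (Set.Ioi (0 : ℝ)) := isOpen_Ioi
  have hderiv : ∀ x ∈ Set.Ioi (0 : ℝ),
      deriv (fun x : ℝ ↦ x ^ p) x = p * x ^ (p - 1) := fun x hx =>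
    Real.deriv_rpow_const x p
  refine convexOn_of_deriv2_nonneg (convex_Ioi 0) ?_ ?_ ?_ ?_
  · exact fun x hx => (Real.continuousAt_rpow_const x p (Or.inl (ne_of_gt hx))).continuousWithinAt
  · rw [hopen.interior_eq]
    exact fun x hx =>
      (Real.hasDerivAt_rpow_const (p := p) (Or.inl (ne_of_gt hx))).differentiableAt.differentiableWithinAt
  · rw [hopen.interior_eq]
    intro x hx
    have : Set.EqOn (deriv fun x : ℝ ↦ x ^ p) (fun x : ℝ ↦ p * x ^ (p - 1)) (Set.Ioi 0) :=
      hderiv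
    refine DifferentiableWithinAt.congr ?_ this (hderiv x hx)
    exact (((Real.hasDerivAt_rpow_const (p := p - 1)
      (Or.inl (ne_of_gt hx))).differentiableAt.const_mul p)).differentiableWithinAt
  · rw [hopen.interior_eq]
    intro x hx
    have h1 : deriv^[2] (fun x : ℝ ↦ x ^ p) x
        = deriv (deriv fun x : ℝ ↦ x ^ p) x := by
      simp [Function.iterate_succ, Function.comp]
    rw [h1]
    have heq : deriv (fun x : ℝ ↦ x ^ p) =ᶠ[nhds x] fun x : ℝ ↦ p * x ^ (p - 1) := by
      filter_upwards [hopen.mem_nhds hx] with y hy using hderiv y hy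
    rw [heq.deriv_eq, deriv_const_mul _
        (Real.hasDerivAt_rpow_const (p := p - 1) (Or.inl (ne_of_gt hx))).differentiableAt,
      Real.deriv_rpow_const x (p - 1)]
    have h2 := Real.rpow_pos_of_pos hx (p - 1 - 1)
    have h3 : 0 < p * (p - 1) := mul_pos_of_neg_of_neg hp (by linarith)
    nlinarith [mul_pos h3 h2]

theorem qi_inequality_neg (a b p : ℝ) (hab : a < b) (hp : p < 0) (f : ℝ → ℝ)
    (hfc : ContinuousOn f (Set.Icc a b))
    (hfpos : ∀ x ∈ Set.Icc a b, 0 < f x)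
    (hint : (∫ x in a..b, f x) ≥ (b - a) ^ (p - 1)) :
    (∫ x in a..b, f x ^ p) ≥ (∫ x in a..b, f x) ^ (p - 1) := by
  have hL : (0 : ℝ) < b - a := by linarith
  -- min and max of f on Icc a b
  obtain ⟨c, hc, hmin⟩ := isCompact_Icc.exists_isMinOn (Set.nonempty_Icc.2 hab.le) hfc
  obtain ⟨d, hd, hmax⟩ := isCompact_Icc.exists_isMaxOn (Set.nonempty_Icc.2 hab.le) hfc
  set m := f c with hm
  set M := f d with hM
  have hm0 : 0 < m := hfpos c hc
  have hs : Set.Icc m M ⊆ Set.Ioi (0 : ℝ) := fun x hx => lt_of_lt_of_le hm0 hx.1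
  -- convexity of rpow on [m, M]
  have hconv : ConvexOn ℝ (Set.Icc m M) fun x : ℝ ↦ x ^ p :=
    (convexOn_rpow_neg hp).subset hs (convex_Icc m M)
  have hgc : ContinuousOn (fun x : ℝ ↦ x ^ p) (Set.Icc m M) := fun x hx =>
    (Real.continuousAt_rpow_const x p (Or.inl (ne_of_gt (hs hx)))).continuousWithinAt
  -- measure
  set μ : Measure ℝ := volume.restrict (Set.Ioc a b) with hμ
  have hμuniv : μ Set.univ = ENNReal.ofReal (b - a) := by
    simp [hμ, Real.volume_Ioc]
  haveI : IsFiniteMeasure μ := ⟨by rw [hμuniv]; exact ENNReal.ofReal_lt_top⟩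
  haveI : NeZero μ := ⟨by
    intro h
    rw [Measure.ext_iff] at h
    have := h Set.univ MeasurableSet.univ
    rw [hμuniv] at this
    simp [ENNReal.ofReal_eq_zero] at this
    linarith⟩
  have hIoc : Set.Ioc a b ⊆ Set.Icc a b := Set.Ioc_subset_Icc_self
  have hfs : ∀ᵐ x ∂μ, f x ∈ Set.Icc m M := by
    rw [hμ, ae_restrict_iff' measurableSet_Ioc]
    exact Filter.Eventually.of_forall fun x hx =>
      ⟨hmin (hIoc hx), hmax (hIoc hx)⟩
  have hfcIoc : ContinuousOn f (Set.Ioc a b) := hfc.mono hIoc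
  have hfi : Integrable f μ := by
    rw [hμ]
    exact (hfc.integrableOn_Icc).mono_set hIoc
  have hgcf : ContinuousOn (fun x ↦ f x ^ p) (Set.Icc a b) := fun x hx =>
    (hfc x hx).rpow_const (Or.inl (ne_of_gt (hfpos x hx)))
  have hgi : Integrable ((fun x : ℝ ↦ x ^ p) ∘ f) μ := by
    rw [hμ]
    exact (hgcf.integrableOn_Icc).mono_set hIoc
  have hjensen := hconv.map_average_le hgc isClosed_Icc hfs hfi hgi
  -- rewrite averages
  set I := ∫ x in a..b, f x with hI
  set J := ∫ x in a..b, f x ^ p with hJ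
  have hIeq : ∫ x, f x ∂μ = I := by
    rw [hμ, hI, intervalIntegral.integral_of_le hab.le]
  have hJeq : ∫ x, f x ^ p ∂μ = J := by
    rw [hμ, hJ, intervalIntegral.integral_of_le hab.le]
  rw [average_eq, average_eq, hIeq, hJeq, measureReal_def, hμuniv, ENNReal.toReal_ofReal hL.le] at hjensen
  simp only [smul_eq_mul] at hjensen
  -- now: ((b-a)⁻¹ * I) ^ p ≤ (b-a)⁻¹ * J
  have hIpos : 0 < I := lt_of_lt_of_le (Real.rpow_pos_of_pos hL (p - 1)) hint
  have hLp : (0 : ℝ) < (b - a)⁻¹ * I := by positivity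
  have key : (b - a) * ((b - a)⁻¹ * I) ^ p ≤ J := by
    calc (b - a) * ((b - a)⁻¹ * I) ^ p ≤ (b - a) * ((b - a)⁻¹ * J) := by
          exact mul_le_mul_of_nonneg_left hjensen hL.le
      _ = J := by field_simp
  have hrw : (b - a) * ((b - a)⁻¹ * I) ^ p = (b - a) ^ (1 - p) * I ^ p := by
    rw [Real.mul_rpow (by positivity) hIpos.le, Real.inv_rpow hL.le,
      ← Real.rpow_neg hL.le, ← mul_assoc]
    congr 1
    nth_rewrite 1 [← Real.rpow_one (b - a)]
    rw [← Real.rpow_add hL]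
    norm_num [sub_eq_add_neg]
  rw [hrw] at key
  -- finally: (b-a)^(1-p) * I^p ≥ I^(p-1)
  have hinv : I ^ (-(1 : ℝ)) ≤ (b - a) ^ (1 - p) := by
    rw [Real.rpow_neg_one]
    have h1 : (b - a) ^ (1 - p) = ((b - a) ^ (p - 1))⁻¹ := by
      rw [← Real.rpow_neg hL.le]; ring_nf
    rw [h1]
    exact inv_anti₀ (Real.rpow_pos_of_pos hL (p - 1)) hint
  have hfinal : I ^ (p - 1) ≤ (b - a) ^ (1 - p) * I ^ p := by
    have : I ^ (p - 1) = I ^ (-(1 : ℝ)) * I ^ p := by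
      rw [← Real.rpow_add hIpos]; ring_nf
    rw [this]
    exact mul_le_mul_of_nonneg_right hinv (Real.rpow_pos_of_pos hIpos p).le
  exact le_trans hfinal key
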